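/- Suppose the pair (v, w) is feasible for the inner LP, i.e.: (i) ∂v/∂t(t,x) + y·∇ₓv(t,x) ≤ 0 for all t ∈ [0,T], x ∈ X, y ∈ F(x); (ii) w(x) ≥ v(0,x) + 1 for all x ∈ X; (iii) v(T,x) ≥ 0 for all x ∈ X \ X_T; (iv) w(x) ≥ 0 for all x ∈ X; (v) v(t,x) ≥ 0 for all t ∈ [0,T] and x ∈ ∂X. Then every point x₀ in the topological interior of X with w(x₀) < 1 belongs to the worst-case region of attraction X₀⋆; that is, every admissible trajectory from x₀ satisfies x(t) ∈ X for all t ∈ [0,T] and x(T) ∈ X_T. -/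

import Mathlib

/-- An admissible trajectory from `x₀` on `[0,T]`: a differentiable function with
`x(0) = x₀` and `ẋ(t) ∈ F(x(t))` for all `t ∈ [0,T]`, where
`F(x) = ⋂ᵢ {y : ‖y − yᵢ‖ ≤ M‖x − xᵢ‖}`. -/
def IsAdmissible {n N : ℕ} (M T : ℝ) (xd yd : Fin N → EuclideanSpace ℝ (Fin n))
    (x₀ : EuclideanSpace ℝ (Fin n)) (traj : ℝ → EuclideanSpace ℝ (Fin n)) : Prop :=
  traj 0 = x₀ ∧
  ∃ traj' : ℝ → EuclideanSpace ℝ (Fin n),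
    (∀ t ∈ Set.Icc (0 : ℝ) T, HasDerivAt traj (traj' t) t) ∧
    (∀ t ∈ Set.Icc (0 : ℝ) T, ∀ i : Fin N, ‖traj' t - yd i‖ ≤ M * ‖traj t - xd i‖)

/-- The worst-case region of attraction `X₀⋆`. -/
def worstCaseROA {n N : ℕ} (M T : ℝ) (xd yd : Fin N → EuclideanSpace ℝ (Fin n))
    (X XT : Set (EuclideanSpace ℝ (Fin n))) : Set (EuclideanSpace ℝ (Fin n)) :=
  {x₀ ∈ X | ∀ traj : ℝ → EuclideanSpace ℝ (Fin n),
    IsAdmissible M T xd yd x₀ traj →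
    (∀ t ∈ Set.Icc (0 : ℝ) T, traj t ∈ X) ∧ traj T ∈ XT}

/-- if `(v,w)` is feasible for the inner LP, then every point of the
interior of `X` with `w(x₀) < 1` belongs to the worst-case region of attraction
`X₀⋆`: every admissible trajectory from `x₀` stays in `X` on `[0,T]` and ends in
`X_T` at time `T`. -/
theorem inner_LP_gives_inner_approximation (n N : ℕ) (hn : 0 < n) (hN : 0 < N)
    (M T : ℝ) (hM : 0 < M) (hT : 0 < T)
    (xd yd : Fin N → EuclideanSpace ℝ (Fin n))
    (X XT : Set (EuclideanSpace ℝ (Fin n)))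
    (hX : IsCompact X) (hXT : IsCompact XT) (hsub : XT ⊆ X)
    (v : ℝ × EuclideanSpace ℝ (Fin n) → ℝ) (hv : ContDiff ℝ 1 v)
    (w : EuclideanSpace ℝ (Fin n) → ℝ) (hw : Continuous w)
    -- (i) Lie derivative constraint
    (hLie : ∀ t ∈ Set.Icc (0 : ℝ) T, ∀ x ∈ X, ∀ y : EuclideanSpace ℝ (Fin n),
      (∀ i : Fin N, ‖y - yd i‖ ≤ M * ‖x - xd i‖) →
      fderiv ℝ v (t, x) (1, y) ≤ 0)
    -- (ii)
    (hwv : ∀ x ∈ X, w x ≥ v (0, x) + 1)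
    -- (iii)
    (hvT : ∀ x ∈ X \ XT, v (T, x) ≥ 0)
    -- (iv)
    (hw0 : ∀ x ∈ X, w x ≥ 0)
    -- (v)
    (hvb : ∀ t ∈ Set.Icc (0 : ℝ) T, ∀ x ∈ frontier X, v (t, x) ≥ 0) :
    ∀ x₀ ∈ interior X, w x₀ < 1 → x₀ ∈ worstCaseROA M T xd yd X XT := by
  intro x₀ hx₀ hwx₀
  have hx₀X : x₀ ∈ X := interior_subset hx₀
  refine ⟨hx₀X, ?_⟩
  rintro traj ⟨h0, traj', hderiv, hF⟩
  have hv0 : v (0, x₀) < 0 := by have := hwv x₀ hx₀X; linarith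
  have hXclosed : IsClosed X := hX.isClosed
  -- derivative of t ↦ v (t, traj t)
  have hg : ∀ t ∈ Set.Icc (0:ℝ) T, HasDerivAt (fun s => v (s, traj s))
      (fderiv ℝ v (t, traj t) (1, traj' t)) t := by
    intro t ht
    have hc : HasDerivAt (fun s => ((s, traj s) : ℝ × EuclideanSpace ℝ (Fin n)))
        (1, traj' t) t := (hasDerivAt_id t).prodMk (hderiv t ht)
    exact ((hv.differentiable one_ne_zero (t, traj t)).hasFDerivAt).comp_hasDerivAt t hc
  -- monotonicity: if the trajectory stays in X up to τ, then v decreases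
  have key : ∀ τ ∈ Set.Icc (0:ℝ) T, (∀ s ∈ Set.Icc (0:ℝ) τ, traj s ∈ X) →
      v (τ, traj τ) ≤ v (0, x₀) := by
    intro τ hτ hin
    have hsub' : Set.Icc (0:ℝ) τ ⊆ Set.Icc 0 T := Set.Icc_subset_Icc le_rfl hτ.2
    have hanti : AntitoneOn (fun s => v (s, traj s)) (Set.Icc 0 τ) := by
      apply antitoneOn_of_deriv_nonpos (convex_Icc 0 τ)
      · intro s hs; exact ((hg s (hsub' hs)).continuousAt).continuousWithinAt
      · intro s hs
        rw [interior_Icc] at hs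
        exact (hg s (hsub' ⟨hs.1.le, hs.2.le⟩)).differentiableAt.differentiableWithinAt
      · intro s hs
        rw [interior_Icc] at hs
        have hs' : s ∈ Set.Icc (0:ℝ) T := hsub' ⟨hs.1.le, hs.2.le⟩
        rw [(hg s hs').deriv]
        exact hLie s hs' (traj s) (hin s ⟨hs.1.le, hs.2.le⟩) (traj' s) (hF s hs')
    have := hanti ⟨le_rfl, hτ.1⟩ ⟨hτ.1, le_rfl⟩ hτ.1
    simpa [h0] using this
  -- the supremum of times up to which the trajectory stays in X
  set S : Set ℝ := {t | t ∈ Set.Icc (0:ℝ) T ∧ ∀ s ∈ Set.Icc (0:ℝ) t, traj s ∈ X} with hS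
  have h0S : (0:ℝ) ∈ S := by
    refine ⟨⟨le_rfl, hT.le⟩, ?_⟩
    intro s hs
    have hs0 : s = 0 := le_antisymm hs.2 hs.1
    simpa [hs0, h0] using hx₀X
  have hbdd : BddAbove S := ⟨T, fun t ht => ht.1.2⟩
  set τ := sSup S with hτdef
  have hτ0 : 0 ≤ τ := le_csSup hbdd h0S
  have hτT : τ ≤ T := csSup_le ⟨0, h0S⟩ (fun t ht => ht.1.2)
  have hτIcc : τ ∈ Set.Icc (0:ℝ) T := ⟨hτ0, hτT⟩
  have hlt : ∀ s, 0 ≤ s → s < τ → traj s ∈ X := by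
    intro s hs0 hsτ
    obtain ⟨t, htS, hst⟩ := exists_lt_of_lt_csSup ⟨0, h0S⟩ hsτ
    exact htS.2 s ⟨hs0, hst.le⟩
  have hcτ : ContinuousAt traj τ := (hderiv τ hτIcc).continuousAt
  have htrajτ : traj τ ∈ X := by
    rcases eq_or_lt_of_le hτ0 with h | hpos
    · simpa [← h, h0] using hx₀X
    · have hne : (nhdsWithin τ (Set.Iio τ)).NeBot := nhdsLT_neBot τ
      have htend : Filter.Tendsto traj (nhdsWithin τ (Set.Iio τ)) (nhds (traj τ)) :=
        hcτ.tendsto.mono_left nhdsWithin_le_nhds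
      refine hXclosed.mem_of_tendsto htend ?_
      filter_upwards [self_mem_nhdsWithin,
        mem_nhdsWithin_of_mem_nhds (Ioi_mem_nhds hpos)] with s hs1 hs2
      exact hlt s (le_of_lt hs2) hs1
  have hall : ∀ s ∈ Set.Icc (0:ℝ) τ, traj s ∈ X := by
    intro s hs
    rcases lt_or_eq_of_le hs.2 with h | h
    · exact hlt s hs.1 h
    · rw [h]; exact htrajτ
  have hvτ : v (τ, traj τ) ≤ v (0, x₀) := key τ hτIcc hall
  -- τ must equal T
  have hτeq : τ = T := by
    refine le_antisymm hτT (not_lt.1 fun hτltT => ?_)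
    by_cases hint : traj τ ∈ interior X
    · -- trajectory can be extended a bit further inside X, contradicting sup
      have hev : ∀ᶠ s in nhds τ, traj s ∈ interior X :=
        hcτ.eventually_mem (isOpen_interior.mem_nhds hint)
      obtain ⟨ε, hε, hball⟩ := Metric.eventually_nhds_iff.1 hev
      set t' := min (τ + ε/2) T with ht'def
      have hτt' : τ < t' := lt_min (by linarith) hτltT
      have ht'S : t' ∈ S := by
        refine ⟨⟨le_trans hτ0 hτt'.le, min_le_right _ _⟩, ?_⟩
        intro s hs
        rcases le_or_gt s τ with h | h
        · exact hall s ⟨hs.1, h⟩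
        · have h1 : s ≤ τ + ε/2 := le_trans hs.2 (min_le_left _ _)
          have : dist s τ < ε := by
            rw [Real.dist_eq, abs_of_nonneg (by linarith)]
            linarith
          exact interior_subset (hball this)
      exact absurd (le_csSup hbdd ht'S) (not_le.2 hτt')
    · -- trajectory is on the frontier, but v < 0 there: contradiction
      have hfr : traj τ ∈ frontier X := by
        rw [hXclosed.frontier_eq]
        exact ⟨htrajτ, hint⟩
      have := hvb τ hτIcc (traj τ) hfr
      linarith
  constructor
  · intro t ht
    exact hall t (by rw [hτeq]; exact ht)
  · have hvT' : v (T, traj T) < 0 := by rw [← hτeq]; linarith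
    by_contra hnot
    have : traj T ∈ X \ XT := ⟨by rw [← hτeq]; exact htrajτ, hnot⟩
    have := hvT (traj T) this
    linarith
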